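/- With the kneading map Q of the recursive construction (Q(k_i) = k_i − 1 for i ≥ 3, Q(k_i + j) = Q(k_{i−1} + j − 1), k_i = 2k_{i−1} − k_{i−2} + 1), one has S_{k_{i+1}−1} − S_{k_i} = S_{k_i−1} − S_{k_{i−1}−1} for all sufficiently large i. -/
import Mathlib


/-- For the cutting times `S` of the recursively constructed kneading map
(`k_2 = k_1 + 1`, `k_i = 2 k_{i-1} − k_{i-2} + 1`, `Q(k_i) = k_i − 1` for `i ≥ 3`,
`Q(k_i + j) = Q(k_{i-1} + j − 1)`), one has
`S_{k_{i+1}−1} − S_{k_i} = S_{k_i−1} − S_{k_{i−1}−1}` for all sufficiently large `i`. -/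
theorem recursive_construction_cutting_time_identity (S Q k : ℕ → ℕ)
    (hS0 : S 0 = 1) (hmono : StrictMono S)
    (hQlt : ∀ l, 1 ≤ l → Q l < l)
    (hrec : ∀ l, 1 ≤ l → S l = S (l - 1) + S (Q l))
    (hk1 : 1 ≤ k 1) (hk2 : k 2 = k 1 + 1)
    (hki : ∀ i, 3 ≤ i → k i + k (i - 2) = 2 * k (i - 1) + 1)
    (hQki : ∀ i, 3 ≤ i → Q (k i) = k i - 1)
    (hQkj : ∀ i, 2 ≤ i → ∀ j, 1 ≤ j → k i + j < k (i + 1) →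
      Q (k i + j) = Q (k (i - 1) + j - 1)) :
    ∃ N, ∀ i, N ≤ i →
      S (k (i + 1) - 1) + S (k (i - 1) - 1) = S (k i) + S (k i - 1) := by
  -- k grows strictly (and k i ≥ i) from index 1 on
  have hkstep : ∀ i, 1 ≤ i → k i < k (i + 1) := by
    intro i hi
    induction i with
    | zero => omega
    | succ n ih =>
      rcases Nat.lt_or_ge n 1 with hn | hn
      · have : n = 0 := by omega
        subst this
        show k 1 < k 2
        omega
      · have h := hki (n + 2) (by omega)
        have e1 : n + 2 - 1 = n + 1 := by omega
        have e2 : n + 2 - 2 = n := by omega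
        rw [e1, e2] at h
        have := ih hn
        show k (n + 1) < k (n + 2)
        omega
  have hklb : ∀ i, 1 ≤ i → i ≤ k i := by
    intro i hi
    induction i with
    | zero => omega
    | succ n ih =>
      rcases Nat.lt_or_ge n 1 with hn | hn
      · have : n = 0 := by omega
        subst this
        show 1 ≤ k 1
        omega
      · have := ih hn
        have h1 := hkstep n hn
        omega
  refine ⟨3, fun i hi => ?_⟩
  set a := k (i - 1) with ha
  set b := k i with hb
  have hi1 : i - 1 + 1 = i := by omega
  have hab : a < b := by
    have := hkstep (i - 1) (by omega)
    rwa [hi1] at this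
  have ha1 : 1 ≤ a := by
    have := hklb (i - 1) (by omega)
    omega
  have hc : k (i + 1) + a = 2 * b + 1 := by
    have h := hki (i + 1) (by omega)
    have e1 : i + 1 - 1 = i := by omega
    have e2 : i + 1 - 2 = i - 1 := by omega
    rw [e1, e2] at h
    exact h
  -- key telescoping claim
  have claim : ∀ t, t ≤ b - a → S (b + t) + S (a - 1) = S b + S (a - 1 + t) := by
    intro t
    induction t with
    | zero => simp
    | succ t ih =>
      intro ht
      have iht := ih (by omega)
      have hq : Q (b + (t + 1)) = Q (a + t) := by
        have h := hQkj i (by omega) (t + 1) (by omega) (by omega)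
        have e : k (i - 1) + (t + 1) - 1 = a + t := by omega
        rw [e, ← hb] at h
        exact h
      have h1 := hrec (b + (t + 1)) (by omega)
      have h2 := hrec (a + t) (by omega)
      have e1 : b + (t + 1) - 1 = b + t := by omega
      have e2 : a + t - 1 = a - 1 + t := by omega
      have e3 : a - 1 + (t + 1) = a + t := by omega
      rw [e1, hq] at h1
      rw [e2] at h2
      rw [e3]
      omega
  have h := claim (b - a) le_rfl
  have e4 : b + (b - a) = k (i + 1) - 1 := by omega
  have e5 : a - 1 + (b - a) = b - 1 := by omega
  rw [e4, e5] at h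
  exact h
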